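/- arXiv:1810.08974 — 2 statements merged into one kernel-verified Lean document; each statement's English description precedes it below -/
import Mathlib

section
/- Let α > 0 and 0 < b < 1. Define g(τ) = (4(2-b)/α)(e^{ατ} - 1 - ατ - (α²/2)τ²) - (8/α)(e^{ατ}(ατ - 1) + 1 - (α²/2)τ²). Then g(τ) ≤ 0 for all τ ≥ 0. -/
private lemma nonneg_of_deriv (f f' : ℝ → ℝ) (h0 : f 0 = 0)
    (hd : ∀ x, HasDerivAt f (f' x) x)
    (hnn : ∀ x, 0 ≤ x → 0 ≤ f' x) :
    ∀ x, 0 ≤ x → 0 ≤ f x := by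
  intro x hx
  have hm : MonotoneOn f (Set.Ici (0:ℝ)) := by
    apply monotoneOn_of_deriv_nonneg (convex_Ici 0)
    · exact (Continuous.continuousOn (by
        have : Differentiable ℝ f := fun y => (hd y).differentiableAt
        exact this.continuous))
    · intro y hy
      exact (hd y).differentiableAt.differentiableWithinAt
    · intro y hy
      rw [interior_Ici] at hy
      rw [(hd y).deriv]
      exact hnn y (le_of_lt hy)
  have := hm (Set.self_mem_Ici) (Set.mem_Ici.mpr hx) hx
  linarith [this]

private lemma exp_quad (x : ℝ) (hx : 0 ≤ x) :
    1 + x + x ^ 2 / 2 ≤ Real.exp x := by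
  have := nonneg_of_deriv (fun y => Real.exp y - 1 - y - y ^ 2 / 2)
    (fun y => Real.exp y - 1 - y) (by simp)
    (fun y => by
      have h1 : HasDerivAt Real.exp (Real.exp y) y := Real.hasDerivAt_exp y
      have h2 : HasDerivAt (fun z : ℝ => z ^ 2 / 2) y y := by
        have := (hasDerivAt_pow 2 y).div_const 2
        simpa using this
      exact ((h1.sub_const 1).sub (hasDerivAt_id y)).sub h2)
    (fun y hy => by
      have := Real.add_one_le_exp y
      linarith) x hx
  linarith

private lemma key_ineq (x : ℝ) (hx : 0 ≤ x) :
    (2 - x) * Real.exp x ≤ 2 + x := by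
  have hd1 : ∀ y : ℝ, 0 ≤ y → 0 ≤ 1 - (1 - y) * Real.exp y := by
    intro y hy
    have h1 : -y + 1 ≤ Real.exp (-y) := Real.add_one_le_exp (-y)
    have h2 : (0:ℝ) < Real.exp y := Real.exp_pos y
    have h3 : (1 - y) * Real.exp y ≤ Real.exp (-y) * Real.exp y := by
      apply mul_le_mul_of_nonneg_right _ (le_of_lt h2)
      linarith
    rw [← Real.exp_add] at h3
    simp at h3
    linarith
  have := nonneg_of_deriv (fun y => 2 + y - (2 - y) * Real.exp y)
    (fun y => 1 - (1 - y) * Real.exp y) (by simp)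
    (fun y => by
      have h1 : HasDerivAt (fun z : ℝ => (2 - z) * Real.exp z)
          ((-1) * Real.exp y + (2 - y) * Real.exp y) y := by
        exact ((hasDerivAt_id y).const_sub 2).mul (Real.hasDerivAt_exp y)
      have h2 : HasDerivAt (fun z : ℝ => 2 + z - (2 - z) * Real.exp z)
          (1 - ((-1) * Real.exp y + (2 - y) * Real.exp y)) y := by
        exact ((hasDerivAt_id y).const_add 2).sub h1
      convert h2 using 1
      ring)
    hd1 x hx
  linarith

theorem stmt_1 (α b : ℝ) (hα : 0 < α) (hb0 : 0 < b) (hb1 : b < 1)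
    (g : ℝ → ℝ)
    (hg : ∀ τ : ℝ, g τ =
      (4 * (2 - b) / α) * (Real.exp (α * τ) - 1 - α * τ - (α ^ 2 / 2) * τ ^ 2)
      - (8 / α) * (Real.exp (α * τ) * (α * τ - 1) + 1 - (α ^ 2 / 2) * τ ^ 2)) :
    ∀ τ : ℝ, 0 ≤ τ → g τ ≤ 0 := by
  intro τ hτ
  rw [hg τ]
  set x := α * τ with hxdef
  have hx : 0 ≤ x := mul_nonneg (le_of_lt hα) hτ
  have hsq : (α ^ 2 / 2) * τ ^ 2 = x ^ 2 / 2 := by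
    rw [hxdef]; ring
  rw [hsq]
  set A := Real.exp x - 1 - x - x ^ 2 / 2 with hA
  set B := Real.exp x * (x - 1) + 1 - x ^ 2 / 2 with hB
  have hAnn : 0 ≤ A := by
    have := exp_quad x hx
    rw [hA]; linarith
  have hAB : A ≤ B := by
    have := key_ineq x hx
    rw [hA, hB]; nlinarith [Real.exp_pos x]
  have h1 : (2 - b) * A ≤ 2 * B := by nlinarith
  have hαinv : 0 < 1 / α := by positivity
  have : 4 * (2 - b) / α * A ≤ 8 / α * B := by
    rw [div_mul_eq_mul_div, div_mul_eq_mul_div, div_le_div_iff₀ hα hα]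
    nlinarith
  linarith
end

section
/- (Continuity/bootstrap argument) Let X : [0,T] → ℝ be nonnegative and continuous, and suppose there exist constants a, b > 0 and θ > 1 such that X(t) ≤ a + b·X(t)^θ for all t ∈ [0,T]. If a < (1 - 1/θ)·(θb)^{-1/(θ-1)} and X(0) ≤ (θb)^{-1/(θ-1)}, then X(t) ≤ θa/(θ-1) for all t ∈ [0,T]. -/
theorem stmt_8 (T a b θ : ℝ) (hT : 0 < T) (ha : 0 < a) (hb : 0 < b) (hθ : 1 < θ)
    (X : ℝ → ℝ) (hcont : ContinuousOn X (Set.Icc 0 T))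
    (hpos : ∀ t ∈ Set.Icc (0 : ℝ) T, 0 ≤ X t)
    (hineq : ∀ t ∈ Set.Icc (0 : ℝ) T, X t ≤ a + b * X t ^ θ)
    (hsmall : a < (1 - 1 / θ) * (θ * b) ^ (-(1 / (θ - 1)) : ℝ))
    (hX0 : X 0 ≤ (θ * b) ^ (-(1 / (θ - 1)) : ℝ)) :
    ∀ t ∈ Set.Icc (0 : ℝ) T, X t ≤ θ * a / (θ - 1) := by
  have hθ0 : (0:ℝ) < θ := by linarith
  have hs : (0:ℝ) < θ - 1 := by linarith
  have hθb : 0 < θ * b := by positivity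
  set c := (θ*b) ^ (-(1/(θ-1)) : ℝ) with hc_def
  have hc : 0 < c := Real.rpow_pos_of_pos hθb _
  have hcθ : c ^ θ = c * (θ*b)⁻¹ := by
    rw [hc_def, ← Real.rpow_mul hθb.le, ← Real.rpow_neg_one (θ*b),
      ← Real.rpow_add hθb]
    congr 1
    field_simp
    ring
  have key : b * c ^ θ = c / θ := by
    rw [hcθ]
    field_simp
  have key2 : b * c ^ (θ-1) = 1/θ := by
    have h1 : c ^ (θ-1) = c ^ θ / c ^ (1:ℝ) := Real.rpow_sub hc θ 1
    rw [Real.rpow_one] at h1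
    rw [h1]
    field_simp
    have key' : b * c ^ θ * θ = c := by rw [key]; field_simp
    linear_combination key'
  have hexp : (1 - 1/θ) * c = c - c/θ := by ring
  have hne : ∀ t ∈ Set.Icc (0:ℝ) T, X t ≠ c := by
    intro t ht heq
    have h := hineq t ht
    rw [heq, key] at h
    rw [hexp] at hsmall
    linarith
  have h0lt : X 0 < c := lt_of_le_of_ne hX0 (hne 0 ⟨le_refl 0, hT.le⟩)
  have hlt : ∀ t ∈ Set.Icc (0:ℝ) T, X t < c := by
    intro t ht
    by_contra h
    push_neg at h
    have hsub : Set.Icc (0:ℝ) t ⊆ Set.Icc 0 T := Set.Icc_subset_Icc le_rfl ht.2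
    have hiv := intermediate_value_Icc ht.1 (hcont.mono hsub)
    have hmem : c ∈ X '' Set.Icc 0 t := hiv ⟨h0lt.le, h⟩
    obtain ⟨s, hsm, hXs⟩ := hmem
    exact hne s (hsub hsm) hXs
  intro t ht
  rcases eq_or_lt_of_le (hpos t ht) with h0 | h0
  · have : (0:ℝ) ≤ θ * a / (θ - 1) := by positivity
    linarith [h0.symm.le, this]
  · have h1 := hineq t ht
    have hpow : X t ^ θ = X t ^ (θ-1) * X t := by
      have h := Real.rpow_add_one h0.ne' (θ-1)
      rw [sub_add_cancel] at h
      exact h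
    have h2 : X t ^ (θ-1) ≤ c ^ (θ-1) :=
      Real.rpow_le_rpow h0.le (hlt t ht).le hs.le
    have h3 : X t ≤ a + (1/θ) * X t := by
      calc X t ≤ a + b * X t ^ θ := h1
        _ = a + b * (X t ^ (θ-1) * X t) := by rw [hpow]
        _ ≤ a + b * (c ^ (θ-1) * X t) := by nlinarith [mul_le_mul_of_nonneg_right h2 h0.le]
        _ = a + (b * c ^ (θ-1)) * X t := by ring
        _ = a + (1/θ) * X t := by rw [key2]
    rw [le_div_iff₀ hs]
    have h3' : θ * X t ≤ θ * a + X t := by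
      calc θ * X t ≤ θ * (a + 1/θ * X t) := by nlinarith
        _ = θ * a + X t := by field_simp
    nlinarith
end
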